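/- Let Q be a finite-dimensional real inner-product space, E, S : Q → ℝ be C¹, J : Q → End(Q) skew-symmetric (J(q)ᵀ = −J(q)), and R* : Q × Q → ℝ with R*(q,·) convex, nonnegative, R*(q,0) = 0, and R*(q, λ DE(q)) = 0 for all λ ∈ ℝ. If q : ℝ → Q is C¹ and satisfies q̇(t) = J(q(t)) DE(q(t)) + ξ(t) with ξ(t) ∈ ∂_ζ R*(q(t), DS(q(t))), and additionally J(q)DS(q) = 0 for all q, then t ↦ E(q(t)) is constant and t ↦ S(q(t)) is nondecreasing. -/
import Mathlib


open RealInnerProductSpace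

/-- GENERIC structure: energy conservation and entropy production.  If
`q̇ = J(q)DE(q) + ξ` with `ξ(t)` in the convex subdifferential of `R*(q(t),·)` at
`DS(q(t))`, `J` skew-symmetric with `J(q)DS(q) = 0`, and `R*(q,·)` convex,
nonnegative, vanishing at `0` and along `ℝ·DE(q)`, then `E∘q` is constant and
`S∘q` is nondecreasing. -/
theorem stmt16 {Q : Type*} [NormedAddCommGroup Q] [InnerProductSpace ℝ Q]
    [FiniteDimensional ℝ Q]
    (E S : Q → ℝ) (DE DS : Q → Q)
    (hE : Differentiable ℝ E) (hS : Differentiable ℝ S)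
    (hDE : ∀ p v, fderiv ℝ E p v = ⟪DE p, v⟫)
    (hDS : ∀ p v, fderiv ℝ S p v = ⟪DS p, v⟫)
    (J : Q → Q →L[ℝ] Q)
    (hJskew : ∀ p, ContinuousLinearMap.adjoint (J p) = -(J p))
    (hJS : ∀ p, J p (DS p) = 0)
    (Rstar : Q → Q → ℝ)
    (hRconv : ∀ p, ConvexOn ℝ Set.univ (Rstar p))
    (hRpos : ∀ p ζ, 0 ≤ Rstar p ζ)
    (hR0 : ∀ p, Rstar p 0 = 0)
    (hRE : ∀ p (lam : ℝ), Rstar p (lam • DE p) = 0)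
    (q : ℝ → Q) (ξ : ℝ → Q)
    (hq : ∀ t, HasDerivAt q (J (q t) (DE (q t)) + ξ t) t)
    (hξ : ∀ t ζ, Rstar (q t) (DS (q t)) + ⟪ξ t, ζ - DS (q t)⟫ ≤ Rstar (q t) ζ) :
    (∀ t₁ t₂, E (q t₁) = E (q t₂)) ∧ Monotone (fun t => S (q t)) := by
  -- skew-symmetry: ⟪x, J p x⟫ = 0
  have hskew : ∀ p x, ⟪x, J p x⟫ = 0 := by
    intro p x
    have h1 : ⟪x, (ContinuousLinearMap.adjoint (J p)) x⟫ = ⟪J p x, x⟫ :=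
      ContinuousLinearMap.adjoint_inner_right (J p) x x
    rw [hJskew p] at h1
    simp only [ContinuousLinearMap.neg_apply, inner_neg_right] at h1
    have h2 : ⟪J p x, x⟫ = ⟪x, J p x⟫ := real_inner_comm _ _
    linarith [h1, h2]
  -- ⟪ξ t, DS (q t)⟫ ≥ Rstar ≥ 0
  have hξDS : ∀ t, 0 ≤ ⟪ξ t, DS (q t)⟫ := by
    intro t
    have h := hξ t 0
    rw [hR0] at h
    simp only [zero_sub, inner_neg_right] at h
    have := hRpos (q t) (DS (q t))
    linarith
  -- ⟪ξ t, DE (q t)⟫ = 0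
  have hξDE : ∀ t, ⟪ξ t, DE (q t)⟫ = 0 := by
    intro t
    by_contra h
    set a := ⟪ξ t, DE (q t)⟫ with ha
    set c := ⟪ξ t, DS (q t)⟫ with hc
    have key : ∀ lam : ℝ, lam * a ≤ c := by
      intro lam
      have h1 := hξ t (lam • DE (q t))
      rw [hRE] at h1
      rw [inner_sub_right, real_inner_smul_right] at h1
      have := hRpos (q t) (DS (q t))
      linarith
    have h2 := key ((c + 1) / a)
    rw [div_mul_cancel₀ _ h] at h2
    linarith
  -- derivative of E ∘ q is 0
  have hE' : ∀ t, HasDerivAt (fun s => E (q s)) 0 t := by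
    intro t
    have hd := (hE (q t)).hasFDerivAt.comp_hasDerivAt t (hq t)
    have hval : fderiv ℝ E (q t) (J (q t) (DE (q t)) + ξ t) = 0 := by
      rw [hDE, inner_add_right, hskew, real_inner_comm, hξDE]
      ring
    rwa [hval] at hd
  -- derivative of S ∘ q is ⟪ξ t, DS (q t)⟫ ≥ 0
  have hS' : ∀ t, HasDerivAt (fun s => S (q s)) ⟪ξ t, DS (q t)⟫ t := by
    intro t
    have hd := (hS (q t)).hasFDerivAt.comp_hasDerivAt t (hq t)
    have hval : fderiv ℝ S (q t) (J (q t) (DE (q t)) + ξ t) = ⟪ξ t, DS (q t)⟫ := by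
      rw [hDS, inner_add_right]
      have h1 : ⟪DS (q t), J (q t) (DE (q t))⟫ = 0 := by
        have h2 : ⟪(ContinuousLinearMap.adjoint (J (q t))) (DS (q t)), DE (q t)⟫
            = ⟪DS (q t), J (q t) (DE (q t))⟫ :=
          ContinuousLinearMap.adjoint_inner_left (J (q t)) (DE (q t)) (DS (q t))
        rw [hJskew] at h2
        simp only [ContinuousLinearMap.neg_apply, hJS, neg_zero, inner_zero_left] at h2
        exact h2.symm
      rw [h1, real_inner_comm]
      ring
    rwa [hval] at hd
  constructor
  · intro t₁ t₂
    exact is_const_of_deriv_eq_zero (fun t => (hE' t).differentiableAt)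
      (fun t => (hE' t).deriv) t₁ t₂
  · apply monotone_of_deriv_nonneg (fun t => (hS' t).differentiableAt)
    intro t
    rw [(hS' t).deriv]
    exact hξDS t
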